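/- Let φ be a flow on a locally compact metric space M and let (N, L) be a regular index pair for an isolated invariant set I, with exit time map τ₊ : N → [0,∞]. Then the map φ_♮ : N × [0,∞) → N defined by φ_♮(x,t) = φ(min{t, τ₊(x)}, x) is well defined (its values lie in N) and continuous. -/

import Mathlib

open Set
open scoped Classical ENNReal

/-- The exit time map `τ₊ : N → [0,∞]` of an index pair `(N, L)` for the flow `φ`:
`τ₊(x) = sup { t ≥ 0 : φ([0,t] × {x}) ⊆ N ∖ L }` for `x ∈ N ∖ L`, and `τ₊(x) = 0`
for `x ∈ L`. -/
noncomputable def exitTime {M : Type*} [TopologicalSpace M]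
    (φ : ℝ → M → M) (N L : Set M) (x : M) : ℝ≥0∞ :=
  if x ∈ L then 0
  else sSup {τ : ℝ≥0∞ | ∃ t : ℝ, 0 ≤ t ∧ τ = ENNReal.ofReal t ∧
    ∀ s : ℝ, s ∈ Set.Icc 0 t → φ s x ∈ N \ L}

/-- Let `φ` be a flow on a locally compact metric space `M` and let `(N, L)` be a
regular index pair for an isolated invariant set `I`, with exit time map
`τ₊ : N → [0,∞]`.  Then the map `φ_♮ : N × [0,∞) → N` defined by
`φ_♮(x,t) = φ(min{t, τ₊(x)}, x)` is well defined (its values lie in `N`) and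
continuous. -/
theorem induced_semiflow_continuous
    {M : Type*} [MetricSpace M] [LocallyCompactSpace M]
    (φ : ℝ → M → M)
    (hφ_cont : Continuous fun p : ℝ × M => φ p.1 p.2)
    (hφ_zero : ∀ x, φ 0 x = x)
    (hφ_add : ∀ t s x, φ t (φ s x) = φ (t + s) x)
    (I N L : Set M)
    -- `(N, L)` is a pair of closed sets with `L ⊆ N`
    (hN_closed : IsClosed N) (hL_closed : IsClosed L) (hLN : L ⊆ N)
    -- `I` is an invariant set and `closure (N ∖ L)` is an isolating neighborhood for `I`
    (hI_inv : ∀ t : ℝ, φ t '' I ⊆ I)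
    (h_iso_cpt : IsCompact (closure (N \ L)))
    (h_iso_int : I ⊆ interior (closure (N \ L)))
    (h_iso_max : ∀ S : Set M, (∀ t : ℝ, φ t '' S ⊆ S) → S ⊆ closure (N \ L) → S ⊆ I)
    -- `L` is positively invariant relative to `N`
    (h_posInv : ∀ x ∈ L, ∀ t : ℝ, 0 ≤ t →
      (∀ s ∈ Set.Icc 0 t, φ s x ∈ N) → ∀ s ∈ Set.Icc 0 t, φ s x ∈ L)
    -- `L` is the exit set of `N`
    (h_exit : ∀ x ∈ N, ∀ t : ℝ, 0 ≤ t → φ t x ∉ N → ∃ t' ∈ Set.Icc 0 t, φ t' x ∈ L)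
    -- the index pair is regular: the exit time map is continuous on `N`
    (h_reg : ContinuousOn (exitTime φ N L) N) :
    (∀ x ∈ N, ∀ t : ℝ, 0 ≤ t →
        φ (min (ENNReal.ofReal t) (exitTime φ N L x)).toReal x ∈ N) ∧
    ContinuousOn
      (fun p : M × ℝ => φ (min (ENNReal.ofReal p.2) (exitTime φ N L p.1)).toReal p.1)
      (N ×ˢ Set.Ici (0 : ℝ)) := by

  have hNL_sub : closure (N \ L) ⊆ N := closure_minimal diff_subset hN_closed
  have key : ∀ x ∈ N \ L, ∀ s : ℝ, 0 ≤ s → ENNReal.ofReal s < exitTime φ N L x →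
      φ s x ∈ N \ L := by
    intro x hx s hs hlt
    rw [exitTime, if_neg hx.2] at hlt
    obtain ⟨b, hbS, hsb⟩ := lt_sSup_iff.mp hlt
    obtain ⟨t', ht'0, rfl, hprop⟩ := hbS
    have hst' : s ≤ t' := by
      by_contra h
      exact absurd (ENNReal.ofReal_le_ofReal (le_of_not_ge h)) (not_le.mpr hsb)
    exact hprop s ⟨hs, hst'⟩
  have mem : ∀ x ∈ N, ∀ t : ℝ, 0 ≤ t →
      φ (min (ENNReal.ofReal t) (exitTime φ N L x)).toReal x ∈ N := by
    intro x hxN t ht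
    by_cases hxL : x ∈ L
    · simp [exitTime, hxL, hφ_zero x, hxN]
    · set a := min (ENNReal.ofReal t) (exitTime φ N L x) with ha
      have haT : a ≠ ⊤ := ne_top_of_le_ne_top ENNReal.ofReal_ne_top (min_le_left _ _)
      have hm0 : (0:ℝ) ≤ a.toReal := ENNReal.toReal_nonneg
      rcases lt_or_eq_of_le (min_le_right (ENNReal.ofReal t) (exitTime φ N L x)) with hlt | heq
      · have h2 : ENNReal.ofReal a.toReal < exitTime φ N L x := by
          rwa [ENNReal.ofReal_toReal haT]
        exact (key x ⟨hxN, hxL⟩ _ hm0 h2).1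
      · rcases eq_or_lt_of_le hm0 with h0 | hpos
        · rw [← h0, hφ_zero]; exact hxN
        · apply hNL_sub
          have hsub : (fun s => φ s x) '' (Set.Ico 0 a.toReal) ⊆ N \ L := by
            rintro _ ⟨s, ⟨hs0, hs1⟩, rfl⟩
            apply key x ⟨hxN, hxL⟩ s hs0
            calc ENNReal.ofReal s < ENNReal.ofReal a.toReal :=
                  (ENNReal.ofReal_lt_ofReal_iff hpos).mpr hs1
              _ = a := ENNReal.ofReal_toReal haT
              _ = exitTime φ N L x := heq
          have hc : Continuous (fun s : ℝ => φ s x) :=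
            hφ_cont.comp (continuous_id.prodMk continuous_const)
          have h1 : φ a.toReal x ∈ closure ((fun s => φ s x) '' Set.Ico 0 a.toReal) := by
            apply image_closure_subset_closure_image hc
            refine ⟨a.toReal, ?_, rfl⟩
            rw [closure_Ico hpos.ne]
            exact ⟨hm0, le_refl _⟩
          exact closure_mono hsub h1
  refine ⟨mem, ?_⟩
  have h1 : ContinuousOn (fun p : M × ℝ => exitTime φ N L p.1) (N ×ˢ Set.Ici (0:ℝ)) :=
    h_reg.comp continuousOn_fst (fun p hp => hp.1)
  have h2 : ContinuousOn
      (fun p : M × ℝ => min (ENNReal.ofReal p.2) (exitTime φ N L p.1)) (N ×ˢ Set.Ici (0:ℝ)) :=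
    continuous_min.comp_continuousOn
      (((ENNReal.continuous_ofReal.comp continuous_snd).continuousOn).prodMk h1)
  have h3 : ContinuousOn
      (fun p : M × ℝ => (min (ENNReal.ofReal p.2) (exitTime φ N L p.1)).toReal)
      (N ×ˢ Set.Ici (0:ℝ)) := by
    apply ENNReal.continuousOn_toReal.comp h2
    intro p _
    exact ne_top_of_le_ne_top ENNReal.ofReal_ne_top (min_le_left _ _)
  exact hφ_cont.comp_continuousOn (h3.prodMk continuousOn_fst)
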